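/- Let S_{U,4} be the linear span of S_U and ψ₄ in ℂ³ ⊗ ℂ³. Then the set of one-dimensional subspaces of S_{U,4} spanned by product vectors has exactly 6 elements, namely those spanned by: ψ₄ = (|0⟩ + |1⟩ + |2⟩) ⊗ (|0⟩ + |1⟩ + |2⟩); |1⟩ ⊗ |1⟩; |0⟩ ⊗ (|0⟩ + |1⟩); (|0⟩ + |1⟩) ⊗ |2⟩; |2⟩ ⊗ (|1⟩ + |2⟩); and (|1⟩ + |2⟩) ⊗ |0⟩. In particular, every product vector in S_{U,4} is a scalar multiple of one of these six vectors. -/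

import Mathlib

noncomputable section

abbrev H3 : Type := EuclideanSpace ℂ (Fin 3)
abbrev H33 : Type := EuclideanSpace ℂ (Fin 3 × Fin 3)

/-- standard basis vector of ℂ³ -/
def ket3 (i : Fin 3) : H3 := EuclideanSpace.single i 1

/-- elementary tensor of two vectors of ℂ³, viewed in ℂ³ ⊗ ℂ³ ≅ ℂ⁹ -/
def tp (u v : H3) : H33 := WithLp.toLp 2 (fun p : Fin 3 × Fin 3 => u p.1 * v p.2)

/-- a product vector in ℂ³ ⊗ ℂ³ -/
def IsProdVec (ξ : H33) : Prop := ∃ u v : H3, ξ = tp u v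

/-- the set of one-dimensional subspaces of `T` spanned by (nonzero) product vectors -/
def prodLines (T : Submodule ℂ H33) : Set (Submodule ℂ H33) :=
  {L | ∃ ξ : H33, ξ ≠ 0 ∧ ξ ∈ T ∧ IsProdVec ξ ∧ L = Submodule.span ℂ {ξ}}

def ψ₀ : H33 := (Real.sqrt 2 : ℂ)⁻¹ • tp (ket3 0) (ket3 0 - ket3 1)
def ψ₁ : H33 := (Real.sqrt 2 : ℂ)⁻¹ • tp (ket3 2) (ket3 1 - ket3 2)
def ψ₂ : H33 := (Real.sqrt 2 : ℂ)⁻¹ • tp (ket3 0 - ket3 1) (ket3 2)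
def ψ₃ : H33 := (Real.sqrt 2 : ℂ)⁻¹ • tp (ket3 2 - ket3 1) (ket3 0)
def ψ₄ : H33 := (3 : ℂ)⁻¹ • tp (ket3 0 + ket3 1 + ket3 2) (ket3 0 + ket3 1 + ket3 2)

/-- the span of the TILES unextendible product basis -/
def U33 : Submodule ℂ H33 := Submodule.span ℂ {ψ₀, ψ₁, ψ₂, ψ₃, ψ₄}

/-- the orthogonal complement of the span of the TILES UPB -/
def SU : Submodule ℂ H33 := U33ᗮ

/-- the perturbation of `S_U` by `ψ₄` -/
def SU4 : Submodule ℂ H33 := SU ⊔ Submodule.span ℂ {ψ₄}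

local notation "⟪" x ", " y "⟫" => @inner ℂ _ _ x y

lemma psi4_apply (p : Fin 3 × Fin 3) : ψ₄ p = 3⁻¹ := by
  obtain ⟨i, j⟩ := p
  have hi : ∀ k : Fin 3, (ket3 0 + ket3 1 + ket3 2 : H3) k = 1 := by
    intro k; fin_cases k <;> simp [ket3, EuclideanSpace.single_apply]
  show (3:ℂ)⁻¹ * _ = _
  rw [tp]; simp [hi]

lemma ip0 (ξ : H33) : ⟪ψ₀, ξ⟫ = (Real.sqrt 2 : ℂ)⁻¹ * (ξ (0,0) - ξ (0,1)) := by
  simp [ψ₀, inner_smul_left, PiLp.inner_apply, tp, ket3, Fintype.sum_prod_type,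
    Fin.sum_univ_three, EuclideanSpace.single_apply, map_inv₀, Complex.conj_ofReal]
  ring

lemma ip1 (ξ : H33) : ⟪ψ₁, ξ⟫ = (Real.sqrt 2 : ℂ)⁻¹ * (ξ (2,1) - ξ (2,2)) := by
  simp [ψ₁, inner_smul_left, PiLp.inner_apply, tp, ket3, Fintype.sum_prod_type,
    Fin.sum_univ_three, EuclideanSpace.single_apply, map_inv₀, Complex.conj_ofReal]
  ring

lemma ip2 (ξ : H33) : ⟪ψ₂, ξ⟫ = (Real.sqrt 2 : ℂ)⁻¹ * (ξ (0,2) - ξ (1,2)) := by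
  simp [ψ₂, inner_smul_left, PiLp.inner_apply, tp, ket3, Fintype.sum_prod_type,
    Fin.sum_univ_three, EuclideanSpace.single_apply, map_inv₀, Complex.conj_ofReal]
  ring

lemma ip3 (ξ : H33) : ⟪ψ₃, ξ⟫ = (Real.sqrt 2 : ℂ)⁻¹ * (ξ (2,0) - ξ (1,0)) := by
  simp [ψ₃, inner_smul_left, PiLp.inner_apply, tp, ket3, Fintype.sum_prod_type,
    Fin.sum_univ_three, EuclideanSpace.single_apply, map_inv₀, Complex.conj_ofReal]
  ring

lemma ip4 (ξ : H33) : ⟪ψ₄, ξ⟫ = (3 : ℂ)⁻¹ * (ξ (0,0) + ξ (0,1) + ξ (0,2) + ξ (1,0) +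
    ξ (1,1) + ξ (1,2) + ξ (2,0) + ξ (2,1) + ξ (2,2)) := by
  have hp : ∀ p : Fin 3 × Fin 3, (starRingEnd ℂ) (ψ₄ p) = 3⁻¹ := by
    intro p; rw [psi4_apply, map_inv₀]; norm_num [Complex.ext_iff]
  simp [PiLp.inner_apply, hp, Fintype.sum_prod_type, Fin.sum_univ_three]
  ring

lemma sqrt2inv_ne : ((Real.sqrt 2 : ℝ) : ℂ)⁻¹ ≠ 0 := by
  have : (0:ℝ) < Real.sqrt 2 := Real.sqrt_pos.mpr (by norm_num)
  simp [Complex.ofReal_eq_zero]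

lemma ip04 : ⟪ψ₀, ψ₄⟫ = 0 := by rw [ip0]; simp [psi4_apply]
lemma ip14 : ⟪ψ₁, ψ₄⟫ = 0 := by rw [ip1]; simp [psi4_apply]
lemma ip24 : ⟪ψ₂, ψ₄⟫ = 0 := by rw [ip2]; simp [psi4_apply]
lemma ip34 : ⟪ψ₃, ψ₄⟫ = 0 := by rw [ip3]; simp [psi4_apply]
lemma ip44 : ⟪ψ₄, ψ₄⟫ = 1 := by rw [ip4]; simp [psi4_apply]; norm_num

lemma mem_SU4_iff (ξ : H33) :
    ξ ∈ SU4 ↔ (ξ (0,0) = ξ (0,1) ∧ ξ (2,1) = ξ (2,2) ∧ ξ (0,2) = ξ (1,2) ∧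
      ξ (2,0) = ξ (1,0)) := by
  constructor
  · intro h
    rw [SU4, Submodule.mem_sup] at h
    obtain ⟨a, ha, b, hb, rfl⟩ := h
    obtain ⟨c, rfl⟩ := Submodule.mem_span_singleton.mp hb
    rw [SU, Submodule.mem_orthogonal] at ha
    have h0 : ⟪ψ₀, a + c • ψ₄⟫ = 0 := by
      rw [inner_add_right, inner_smul_right, ha ψ₀ (Submodule.subset_span (by simp)), ip04]
      simp
    have h1 : ⟪ψ₁, a + c • ψ₄⟫ = 0 := by
      rw [inner_add_right, inner_smul_right, ha ψ₁ (Submodule.subset_span (by simp)), ip14]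
      simp
    have h2 : ⟪ψ₂, a + c • ψ₄⟫ = 0 := by
      rw [inner_add_right, inner_smul_right, ha ψ₂ (Submodule.subset_span (by simp)), ip24]
      simp
    have h3 : ⟪ψ₃, a + c • ψ₄⟫ = 0 := by
      rw [inner_add_right, inner_smul_right, ha ψ₃ (Submodule.subset_span (by simp)), ip34]
      simp
    rw [ip0] at h0; rw [ip1] at h1; rw [ip2] at h2; rw [ip3] at h3
    exact ⟨sub_eq_zero.mp ((mul_eq_zero.mp h0).resolve_left sqrt2inv_ne),
      sub_eq_zero.mp ((mul_eq_zero.mp h1).resolve_left sqrt2inv_ne),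
      sub_eq_zero.mp ((mul_eq_zero.mp h2).resolve_left sqrt2inv_ne),
      sub_eq_zero.mp ((mul_eq_zero.mp h3).resolve_left sqrt2inv_ne)⟩
  · rintro ⟨e1, e2, e3, e4⟩
    rw [SU4, Submodule.mem_sup]
    refine ⟨ξ - ⟪ψ₄, ξ⟫ • ψ₄, ?_, ⟪ψ₄, ξ⟫ • ψ₄,
      Submodule.mem_span_singleton.mpr ⟨_, rfl⟩, by abel⟩
    rw [SU, Submodule.mem_orthogonal]
    intro w hw
    rw [U33] at hw
    induction hw using Submodule.span_induction with
    | mem x hx =>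
      have hx' : x = ψ₀ ∨ x = ψ₁ ∨ x = ψ₂ ∨ x = ψ₃ ∨ x = ψ₄ := by simpa using hx
      rcases hx' with rfl | rfl | rfl | rfl | rfl
      · rw [inner_sub_right, inner_smul_right, ip04, ip0, e1]; ring
      · rw [inner_sub_right, inner_smul_right, ip14, ip1, e2]; ring
      · rw [inner_sub_right, inner_smul_right, ip24, ip2, e3]; ring
      · rw [inner_sub_right, inner_smul_right, ip34, ip3, e4]; ring
      · rw [inner_sub_right, inner_smul_right, ip44]; ring
    | zero => exact inner_zero_left _
    | add x y _ _ hx hy => rw [inner_add_left, hx, hy, add_zero]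
    | smul c x _ hx => rw [inner_smul_left, hx, mul_zero]

lemma span_eq_of_smul (a w : H33) (c : ℂ) (hc : c ≠ 0) (h : a = c • w) :
    Submodule.span ℂ {a} = Submodule.span ℂ {w} := by
  rw [h]; exact Submodule.span_singleton_smul_eq (IsUnit.mk0 c hc) w

lemma tp_eq_zero_v (u v : H3) (h0 : v 0 = 0) (h1 : v 1 = 0) (h2 : v 2 = 0) :
    tp u v = 0 := by
  ext p; obtain ⟨i, j⟩ := p
  fin_cases j <;> simp [tp, h0, h1, h2]

lemma tp_eq_zero_u (u v : H3) (h0 : u 0 = 0) (h1 : u 1 = 0) (h2 : u 2 = 0) :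
    tp u v = 0 := by
  ext p; obtain ⟨i, j⟩ := p
  fin_cases i <;> simp [tp, h0, h1, h2]

lemma classify (u v : H3) (hne : tp u v ≠ 0)
    (h1 : u 0 * v 0 = u 0 * v 1) (h2 : u 2 * v 1 = u 2 * v 2)
    (h3 : u 0 * v 2 = u 1 * v 2) (h4 : u 2 * v 0 = u 1 * v 0) :
    Submodule.span ℂ {tp u v} =
        Submodule.span ℂ {tp (ket3 0 + ket3 1 + ket3 2) (ket3 0 + ket3 1 + ket3 2)} ∨
    Submodule.span ℂ {tp u v} = Submodule.span ℂ {tp (ket3 1) (ket3 1)} ∨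
    Submodule.span ℂ {tp u v} = Submodule.span ℂ {tp (ket3 0) (ket3 0 + ket3 1)} ∨
    Submodule.span ℂ {tp u v} = Submodule.span ℂ {tp (ket3 0 + ket3 1) (ket3 2)} ∨
    Submodule.span ℂ {tp u v} = Submodule.span ℂ {tp (ket3 2) (ket3 1 + ket3 2)} ∨
    Submodule.span ℂ {tp u v} = Submodule.span ℂ {tp (ket3 1 + ket3 2) (ket3 0)} := by
  by_cases hu0 : u 0 = 0
  · -- u 0 = 0
    by_cases hu2 : u 2 = 0
    · -- u = (0, u1, 0)
      by_cases hu1 : u 1 = 0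
      · exact absurd (tp_eq_zero_u u v hu0 hu1 hu2) hne
      · have hv2 : v 2 = 0 := by
          have : u 1 * v 2 = 0 := by rw [← h3, hu0, zero_mul]
          exact (mul_eq_zero.mp this).resolve_left hu1
        have hv0 : v 0 = 0 := by
          have : u 1 * v 0 = 0 := by rw [← h4, hu2, zero_mul]
          exact (mul_eq_zero.mp this).resolve_left hu1
        by_cases hv1 : v 1 = 0
        · exact absurd (tp_eq_zero_v u v hv0 hv1 hv2) hne
        · refine Or.inr (Or.inl (span_eq_of_smul _ _ (u 1 * v 1)
            (mul_ne_zero hu1 hv1) ?_))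
          ext p; obtain ⟨i, j⟩ := p
          fin_cases i <;> fin_cases j <;>
            simp [tp, ket3, EuclideanSpace.single_apply, hu0, hu2, hv0, hv2]
    · -- u 2 ≠ 0
      have hv12 : v 1 = v 2 := mul_left_cancel₀ hu2 h2
      by_cases hv0 : v 0 = 0
      · by_cases hv1 : v 1 = 0
        · exact absurd (tp_eq_zero_v u v hv0 hv1 (hv12 ▸ hv1)) hne
        · have hu1 : u 1 = 0 := by
            have hv2ne : v 2 ≠ 0 := fun h => hv1 (hv12.trans h)
            have : u 1 * v 2 = 0 := by rw [← h3, hu0, zero_mul]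
            exact (mul_eq_zero.mp this).resolve_right hv2ne
          refine Or.inr (Or.inr (Or.inr (Or.inr (Or.inl (span_eq_of_smul _ _ (u 2 * v 1)
            (mul_ne_zero hu2 hv1) ?_)))))
          have hv21 : v 2 = v 1 := hv12.symm
          ext p; obtain ⟨i, j⟩ := p
          fin_cases i <;> fin_cases j <;>
            simp [tp, ket3, EuclideanSpace.single_apply, hu0, hu1, hv0, hv21] <;> ring
      · have hu21 : u 2 = u 1 := mul_right_cancel₀ hv0 h4
        have hu1ne : u 1 ≠ 0 := fun h => hu2 (hu21.trans h)
        have hv2 : v 2 = 0 := by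
          have : u 1 * v 2 = 0 := by rw [← h3, hu0, zero_mul]
          exact (mul_eq_zero.mp this).resolve_left hu1ne
        have hv1 : v 1 = 0 := hv12.trans hv2
        refine Or.inr (Or.inr (Or.inr (Or.inr (Or.inr (span_eq_of_smul _ _ (u 1 * v 0)
          (mul_ne_zero hu1ne hv0) ?_)))))
        ext p; obtain ⟨i, j⟩ := p
        fin_cases i <;> fin_cases j <;>
          simp [tp, ket3, EuclideanSpace.single_apply, hu0, hu21, hv1, hv2] <;> ring
  · -- u 0 ≠ 0
    have hv01 : v 0 = v 1 := mul_left_cancel₀ hu0 h1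
    by_cases hv2 : v 2 = 0
    · by_cases hv0 : v 0 = 0
      · exact absurd (tp_eq_zero_v u v hv0 (hv01 ▸ hv0) hv2) hne
      · have hu21 : u 2 = u 1 := mul_right_cancel₀ hv0 h4
        have hv1ne : v 1 ≠ 0 := hv01 ▸ hv0
        have hu2z : u 2 = 0 := by
          have : u 2 * v 1 = 0 := by rw [h2, hv2, mul_zero]
          exact (mul_eq_zero.mp this).resolve_right hv1ne
        have hu1z : u 1 = 0 := hu21 ▸ hu2z
        refine Or.inr (Or.inr (Or.inl (span_eq_of_smul _ _ (u 0 * v 0)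
          (mul_ne_zero hu0 hv0) ?_)))
        have hv10 : v 1 = v 0 := hv01.symm
        ext p; obtain ⟨i, j⟩ := p
        fin_cases i <;> fin_cases j <;>
          simp [tp, ket3, EuclideanSpace.single_apply, hv10, hv2, hu1z, hu2z] <;> ring
    · have hu10 : u 1 = u 0 := (mul_right_cancel₀ hv2 h3).symm
      by_cases hv0 : v 0 = 0
      · have hv1 : v 1 = 0 := hv01 ▸ hv0
        have hu2z : u 2 = 0 := by
          have : u 2 * v 2 = 0 := by rw [← h2, hv1, mul_zero]
          exact (mul_eq_zero.mp this).resolve_right hv2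
        refine Or.inr (Or.inr (Or.inr (Or.inl (span_eq_of_smul _ _ (u 0 * v 2)
          (mul_ne_zero hu0 hv2) ?_))))
        ext p; obtain ⟨i, j⟩ := p
        fin_cases i <;> fin_cases j <;>
          simp [tp, ket3, EuclideanSpace.single_apply, hu10, hu2z, hv0, hv1] <;> ring
      · have hu20 : u 2 = u 0 := (mul_right_cancel₀ hv0 h4).trans hu10
        have hu2ne : u 2 ≠ 0 := fun h => hu0 (hu20.symm.trans h)
        have hv12 : v 1 = v 2 := mul_left_cancel₀ hu2ne h2
        have hv10 : v 1 = v 0 := hv01.symm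
        have hv20 : v 2 = v 0 := hv12.symm.trans hv10
        refine Or.inl (span_eq_of_smul _ _ (u 0 * v 0) (mul_ne_zero hu0 hv0) ?_)
        ext p; obtain ⟨i, j⟩ := p
        fin_cases i <;> fin_cases j <;>
          simp [tp, ket3, EuclideanSpace.single_apply, hu10, hu20, hv10, hv20] <;> ring

lemma span_ne (a b : H33) (p : Fin 3 × Fin 3) (ha : a p ≠ 0) (hb : b p = 0) :
    Submodule.span ℂ {a} ≠ Submodule.span ℂ {b} := by
  intro h
  have hmem : a ∈ Submodule.span ℂ {b} := h ▸ Submodule.mem_span_singleton_self a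
  obtain ⟨c, hc⟩ := Submodule.mem_span_singleton.mp hmem
  apply ha
  rw [← hc]
  show c * b p = 0
  rw [hb, mul_zero]

theorem statement3 :
    prodLines SU4 =
      {Submodule.span ℂ {tp (ket3 0 + ket3 1 + ket3 2) (ket3 0 + ket3 1 + ket3 2)},
       Submodule.span ℂ {tp (ket3 1) (ket3 1)},
       Submodule.span ℂ {tp (ket3 0) (ket3 0 + ket3 1)},
       Submodule.span ℂ {tp (ket3 0 + ket3 1) (ket3 2)},
       Submodule.span ℂ {tp (ket3 2) (ket3 1 + ket3 2)},
       Submodule.span ℂ {tp (ket3 1 + ket3 2) (ket3 0)}} ∧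
    (prodLines SU4).ncard = 6 := by
  have hset : prodLines SU4 =
      {Submodule.span ℂ {tp (ket3 0 + ket3 1 + ket3 2) (ket3 0 + ket3 1 + ket3 2)},
       Submodule.span ℂ {tp (ket3 1) (ket3 1)},
       Submodule.span ℂ {tp (ket3 0) (ket3 0 + ket3 1)},
       Submodule.span ℂ {tp (ket3 0 + ket3 1) (ket3 2)},
       Submodule.span ℂ {tp (ket3 2) (ket3 1 + ket3 2)},
       Submodule.span ℂ {tp (ket3 1 + ket3 2) (ket3 0)}} := by
    ext L
    simp only [prodLines, Set.mem_setOf_eq, Set.mem_insert_iff, Set.mem_singleton_iff]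
    constructor
    · rintro ⟨ξ, hne, hmem, ⟨u, v, rfl⟩, rfl⟩
      have h := (mem_SU4_iff _).mp hmem
      exact classify u v hne h.1 h.2.1 h.2.2.1 h.2.2.2
    · have hprod : ∀ u v : H3, tp u v ∈ SU4 → tp u v ≠ 0 →
          (∃ ξ : H33, ξ ≠ 0 ∧ ξ ∈ SU4 ∧ IsProdVec ξ ∧
            Submodule.span ℂ {tp u v} = Submodule.span ℂ {ξ}) := by
        intro u v hmem hne
        exact ⟨tp u v, hne, hmem, ⟨u, v, rfl⟩, rfl⟩
      rintro (rfl | rfl | rfl | rfl | rfl | rfl) <;>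
        refine hprod _ _ ((mem_SU4_iff _).mpr ?_) ?_
      · refine ⟨?_, ?_, ?_, ?_⟩ <;> simp [tp, ket3, EuclideanSpace.single_apply]
      · intro h
        have := congrFun (congrArg WithLp.ofLp h) ((0,0) : Fin 3 × Fin 3)
        simp [tp, ket3, EuclideanSpace.single_apply] at this
      · refine ⟨?_, ?_, ?_, ?_⟩ <;> simp [tp, ket3, EuclideanSpace.single_apply]
      · intro h
        have := congrFun (congrArg WithLp.ofLp h) ((1,1) : Fin 3 × Fin 3)
        simp [tp, ket3, EuclideanSpace.single_apply] at this
      · refine ⟨?_, ?_, ?_, ?_⟩ <;> simp [tp, ket3, EuclideanSpace.single_apply]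
      · intro h
        have := congrFun (congrArg WithLp.ofLp h) ((0,0) : Fin 3 × Fin 3)
        simp [tp, ket3, EuclideanSpace.single_apply] at this
      · refine ⟨?_, ?_, ?_, ?_⟩ <;> simp [tp, ket3, EuclideanSpace.single_apply]
      · intro h
        have := congrFun (congrArg WithLp.ofLp h) ((0,2) : Fin 3 × Fin 3)
        simp [tp, ket3, EuclideanSpace.single_apply] at this
      · refine ⟨?_, ?_, ?_, ?_⟩ <;> simp [tp, ket3, EuclideanSpace.single_apply]
      · intro h
        have := congrFun (congrArg WithLp.ofLp h) ((2,1) : Fin 3 × Fin 3)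
        simp [tp, ket3, EuclideanSpace.single_apply] at this
      · refine ⟨?_, ?_, ?_, ?_⟩ <;> simp [tp, ket3, EuclideanSpace.single_apply]
      · intro h
        have := congrFun (congrArg WithLp.ofLp h) ((1,0) : Fin 3 × Fin 3)
        simp [tp, ket3, EuclideanSpace.single_apply] at this
  refine ⟨hset, ?_⟩
  rw [hset]
  have ne1 : ∀ p : Fin 3 × Fin 3,
      tp (ket3 0 + ket3 1 + ket3 2) (ket3 0 + ket3 1 + ket3 2) p = 1 := by
    intro p; obtain ⟨i, j⟩ := p
    fin_cases i <;> fin_cases j <;> simp [tp, ket3, EuclideanSpace.single_apply]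
  have m5 : Submodule.span ℂ {tp (ket3 2) (ket3 1 + ket3 2)} ∉
      ({Submodule.span ℂ {tp (ket3 1 + ket3 2) (ket3 0)}} : Set (Submodule ℂ H33)) := by
    simp only [Set.mem_singleton_iff]
    exact span_ne _ _ (2,1) (by simp [tp, ket3, EuclideanSpace.single_apply])
      (by simp [tp, ket3, EuclideanSpace.single_apply])
  have m4 : Submodule.span ℂ {tp (ket3 0 + ket3 1) (ket3 2)} ∉
      ({Submodule.span ℂ {tp (ket3 2) (ket3 1 + ket3 2)},
        Submodule.span ℂ {tp (ket3 1 + ket3 2) (ket3 0)}} : Set (Submodule ℂ H33)) := by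
    simp only [Set.mem_insert_iff, Set.mem_singleton_iff]
    push_neg
    exact ⟨span_ne _ _ (0,2) (by simp [tp, ket3, EuclideanSpace.single_apply])
        (by simp [tp, ket3, EuclideanSpace.single_apply]),
      span_ne _ _ (0,2) (by simp [tp, ket3, EuclideanSpace.single_apply])
        (by simp [tp, ket3, EuclideanSpace.single_apply])⟩
  have m3 : Submodule.span ℂ {tp (ket3 0) (ket3 0 + ket3 1)} ∉
      ({Submodule.span ℂ {tp (ket3 0 + ket3 1) (ket3 2)},
        Submodule.span ℂ {tp (ket3 2) (ket3 1 + ket3 2)},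
        Submodule.span ℂ {tp (ket3 1 + ket3 2) (ket3 0)}} : Set (Submodule ℂ H33)) := by
    simp only [Set.mem_insert_iff, Set.mem_singleton_iff]
    push_neg
    refine ⟨?_, ?_, ?_⟩ <;>
      exact span_ne _ _ (0,0) (by simp [tp, ket3, EuclideanSpace.single_apply])
        (by simp [tp, ket3, EuclideanSpace.single_apply])
  have m2 : Submodule.span ℂ {tp (ket3 1) (ket3 1)} ∉
      ({Submodule.span ℂ {tp (ket3 0) (ket3 0 + ket3 1)},
        Submodule.span ℂ {tp (ket3 0 + ket3 1) (ket3 2)},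
        Submodule.span ℂ {tp (ket3 2) (ket3 1 + ket3 2)},
        Submodule.span ℂ {tp (ket3 1 + ket3 2) (ket3 0)}} : Set (Submodule ℂ H33)) := by
    simp only [Set.mem_insert_iff, Set.mem_singleton_iff]
    push_neg
    refine ⟨?_, ?_, ?_, ?_⟩ <;>
      exact span_ne _ _ (1,1) (by simp [tp, ket3, EuclideanSpace.single_apply])
        (by simp [tp, ket3, EuclideanSpace.single_apply])
  have m1 : Submodule.span ℂ {tp (ket3 0 + ket3 1 + ket3 2) (ket3 0 + ket3 1 + ket3 2)} ∉
      ({Submodule.span ℂ {tp (ket3 1) (ket3 1)},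
        Submodule.span ℂ {tp (ket3 0) (ket3 0 + ket3 1)},
        Submodule.span ℂ {tp (ket3 0 + ket3 1) (ket3 2)},
        Submodule.span ℂ {tp (ket3 2) (ket3 1 + ket3 2)},
        Submodule.span ℂ {tp (ket3 1 + ket3 2) (ket3 0)}} : Set (Submodule ℂ H33)) := by
    simp only [Set.mem_insert_iff, Set.mem_singleton_iff]
    push_neg
    refine ⟨span_ne _ _ (0,0) (by rw [ne1]; norm_num)
        (by simp [tp, ket3, EuclideanSpace.single_apply]),
      span_ne _ _ (1,0) (by rw [ne1]; norm_num)
        (by simp [tp, ket3, EuclideanSpace.single_apply]), ?_, ?_, ?_⟩ <;>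
      exact span_ne _ _ (0,0) (by rw [ne1]; norm_num)
        (by simp [tp, ket3, EuclideanSpace.single_apply])
  rw [Set.ncard_insert_of_notMem m1, Set.ncard_insert_of_notMem m2,
    Set.ncard_insert_of_notMem m3, Set.ncard_insert_of_notMem m4,
    Set.ncard_insert_of_notMem m5, Set.ncard_singleton]
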